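/- Let N be a positive integer and let H ∈ M_{2N}(ℂ) be Hermitian with τ₁ H* τ₁ = −H (a fermionic BdG Hamiltonian). Then the complex dimension of the kernel of H is even: zero eigenvectors of a fermionic BdG Hamiltonian come in pairs. -/

import Mathlib

open Matrix

open Module Submodule LinearMap in
/-- A nondegenerate alternating bilinear form lives on an even-dimensional space. -/
lemma even_finrank_of_alt_nondeg :
    ∀ (k : ℕ) (V : Type) [AddCommGroup V] [Module ℂ V] [FiniteDimensional ℂ V]
      (B : LinearMap.BilinForm ℂ V), Module.finrank ℂ V = k → B.IsAlt → B.Nondegenerate →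
      Even k := by
  intro k
  induction k using Nat.strong_induction_on with
  | _ k ih =>
    intro V _ _ _ B hk halt hnd
    rcases Nat.eq_zero_or_pos k with h0 | hpos
    · simp [h0]
    have hnt : Nontrivial V := by
      rw [← Module.finrank_pos_iff (R := ℂ)]; omega
    obtain ⟨x, hx⟩ := exists_ne (0 : V)
    have hex : ∃ y, B x y ≠ 0 := by
      by_contra hcon
      push_neg at hcon
      exact hx ((halt.isRefl.nondegenerate_iff_separatingLeft).mp hnd x hcon)
    obtain ⟨y, hy⟩ := hex
    have hrefl : B.IsRefl := halt.isRefl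
    -- x, y are linearly independent
    have hli : LinearIndependent ℂ ![x, y] := by
      rw [LinearIndependent.pair_iff]
      intro s t hst
      have hB1 : B (s • x + t • y) y = 0 := by rw [hst]; simp
      have hB2 : B x (s • x + t • y) = 0 := by rw [hst]; simp
      simp only [map_add, _root_.map_smul, LinearMap.add_apply, LinearMap.smul_apply,
        smul_eq_mul, halt.self_eq_zero, mul_zero, add_zero, zero_add] at hB1 hB2
      constructor
      · rcases mul_eq_zero.mp hB1 with h | h
        · exact h
        · exact absurd h hy
      · rcases mul_eq_zero.mp hB2 with h | h
        · exact h
        · exact absurd h hy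
    set W : Submodule ℂ V := Submodule.span ℂ (Set.range ![x, y]) with hWdef
    have hxW : x ∈ W := Submodule.subset_span ⟨0, rfl⟩
    have hyW : y ∈ W := Submodule.subset_span ⟨1, rfl⟩
    have hWrank : finrank ℂ W = 2 := by
      rw [hWdef, finrank_span_eq_card hli]
      simp
    -- B restricted to W is nondegenerate
    have hWnd : (B.restrict W).Nondegenerate := by
      refine (LinearMap.IsRefl.nondegenerate_iff_separatingLeft (B := B.restrict W) (fun v w => hrefl v w)).mpr ?_
      rintro ⟨v, hv⟩ h
      have hvx : B v x = 0 := h ⟨x, hxW⟩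
      have hvy : B v y = 0 := h ⟨y, hyW⟩
      obtain ⟨c, hc⟩ := (mem_span_range_iff_exists_fun ℂ).mp hv
      simp only [Fin.sum_univ_two, Matrix.cons_val_zero, Matrix.cons_val_one,
        Matrix.head_cons] at hc
      have h1 : B v y = c 0 * B x y := by
        rw [← hc]; simp [halt.self_eq_zero]
      have h2 : B v x = -(c 1 * B x y) := by
        rw [← hc]
        simp only [map_add, _root_.map_smul, LinearMap.add_apply, LinearMap.smul_apply,
          smul_eq_mul, halt.self_eq_zero, mul_zero, zero_add]
        have := LinearMap.IsAlt.neg halt x y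
        rw [← this]
        ring
      have hc0 : c 0 = 0 := by
        have := h1.symm.trans hvy
        rcases mul_eq_zero.mp this with h | h
        · exact h
        · exact absurd h hy
      have hc1 : c 1 = 0 := by
        have : -(c 1 * B x y) = 0 := h2.symm.trans hvx
        have : c 1 * B x y = 0 := by linear_combination -this
        rcases mul_eq_zero.mp this with h | h
        · exact h
        · exact absurd h hy
      apply Subtype.ext
      simp only [Submodule.coe_zero]
      rw [← hc, hc0, hc1]
      simp
    have hC : IsCompl W (B.orthogonal W) :=
      B.isCompl_orthogonal_of_restrict_nondegenerate hrefl hWnd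
    set W' := B.orthogonal W with hW'def
    have hW'nd : (B.restrict W').Nondegenerate := by
      apply B.nondegenerate_restrict_of_disjoint_orthogonal hrefl
      rw [hW'def, B.orthogonal_orthogonal hnd hrefl]
      exact hC.disjoint.symm
    have hW'alt : (B.restrict W').IsAlt := fun v => halt v
    have hsum : finrank ℂ W + finrank ℂ W' = k := by
      rw [Submodule.finrank_add_eq_of_isCompl hC, hk]
    have hklarge : 2 ≤ k := by omega
    have hW'rank : finrank ℂ W' = k - 2 := by omega
    have heven : Even (k - 2) :=
      ih (k - 2) (by omega) W' (B.restrict W') hW'rank hW'alt hW'nd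
    obtain ⟨r, hr⟩ := heven
    exact ⟨r + 1, by omega⟩

/-- A skew-symmetric complex matrix has even rank. -/
lemma even_rank_of_skew {n : Type} [Fintype n] [DecidableEq n]
    (A : Matrix n n ℂ) (h : Aᵀ = -A) : Even A.rank := by
  set B := Matrix.toBilin' A with hBdef
  have hBapp : ∀ v w, B v w = v ⬝ᵥ A *ᵥ w := fun v w => Matrix.toBilin'_apply' A v w
  have halt : B.IsAlt := by
    intro v
    rw [hBapp]
    rw [← add_self_eq_zero]
    nth_rewrite 1 [Matrix.dotProduct_mulVec]
    have : v ᵥ* A = -(A *ᵥ v) := by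
      rw [← Matrix.mulVec_transpose, h, Matrix.neg_mulVec]
    rw [this, neg_dotProduct, dotProduct_comm]
    ring
  obtain ⟨W, hW⟩ := Submodule.exists_isCompl (LinearMap.ker A.mulVecLin)
  -- B restricted to W is nondegenerate
  have hrestnd : (B.restrict W).Nondegenerate := by
    refine (LinearMap.IsRefl.nondegenerate_iff_separatingLeft (B := B.restrict W) (fun v w => halt.isRefl v w)).mpr ?_
    rintro ⟨v, hv⟩ hvp
    have hall : ∀ z, B v z = 0 := by
      intro z
      have hz : z ∈ LinearMap.ker A.mulVecLin ⊔ W := by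
        rw [hW.sup_eq_top]; trivial
      obtain ⟨a, ha, b, hb, rfl⟩ := Submodule.mem_sup.mp hz
      have h1 : B v a = 0 := by
        rw [hBapp]
        have : A *ᵥ a = 0 := ha
        rw [this, dotProduct_zero]
      have h2 : B v b = 0 := hvp ⟨b, hb⟩
      rw [map_add, h1, h2, add_zero]
    have hvec : v ᵥ* A = 0 := by
      funext i
      have := hall (Pi.single i 1)
      rw [hBapp, Matrix.dotProduct_mulVec, dotProduct_single] at this
      simpa using this
    have hker : v ∈ LinearMap.ker A.mulVecLin := by
      have : A *ᵥ v = 0 := by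
        have h1 : Aᵀ *ᵥ v = 0 := by rw [Matrix.mulVec_transpose, hvec]
        rw [h, Matrix.neg_mulVec] at h1
        simpa [neg_eq_zero] using h1
      exact this
    have : v ∈ LinearMap.ker A.mulVecLin ⊓ W := ⟨hker, hv⟩
    rw [hW.inf_eq_bot] at this
    exact Subtype.ext this
  have hWrank : Module.finrank ℂ W = A.rank := by
    have h1 := Submodule.finrank_add_eq_of_isCompl hW
    have h2 := LinearMap.finrank_range_add_finrank_ker A.mulVecLin
    unfold Matrix.rank
    omega
  have := even_finrank_of_alt_nondeg (Module.finrank ℂ W) W (B.restrict W) rfl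
    (fun v => halt v) hrestnd
  rwa [hWrank] at this

/-- `τ₁ = σ₁ ⊗ 1_N`, the 2N×2N matrix with block form [[0, 1],[1, 0]]. -/
noncomputable def tau1 (N : ℕ) : Matrix (Fin N ⊕ Fin N) (Fin N ⊕ Fin N) ℂ :=
  Matrix.fromBlocks 0 1 1 0

/-- Zero eigenvectors of a fermionic BdG Hamiltonian come in pairs: the complex
dimension of the kernel of a Hermitian matrix `H` with `τ₁ H* τ₁ = -H` is even. -/
theorem fermionic_BdG_kernel_even_dim (N : ℕ) (hN : 0 < N)
    (H : Matrix (Fin N ⊕ Fin N) (Fin N ⊕ Fin N) ℂ)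
    (hherm : H.IsHermitian)
    (hferm : tau1 N * H.map (starRingEnd ℂ) * tau1 N = -H) :
    Even (Module.finrank ℂ (LinearMap.ker H.mulVecLin)) := by
  have htau_sq : tau1 N * tau1 N = 1 := by
    unfold tau1
    rw [Matrix.fromBlocks_multiply]
    simp [Matrix.fromBlocks_one]
  have htau_t : (tau1 N)ᵀ = tau1 N := by
    unfold tau1
    rw [Matrix.fromBlocks_transpose]
    simp
  -- H.map conj = Hᵀ
  have hmap : H.map (starRingEnd ℂ) = Hᵀ := by
    ext i j
    have := hherm.apply i j
    simp only [Matrix.map_apply, Matrix.transpose_apply]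
    rw [← this]
    simp
  set A := H * tau1 N with hAdef
  have hskew : Aᵀ = -A := by
    rw [hAdef, Matrix.transpose_mul, htau_t, ← hmap]
    have : tau1 N * H.map (starRingEnd ℂ) = -H * tau1 N := by
      have h1 : tau1 N * H.map (starRingEnd ℂ) * tau1 N * tau1 N = -H * tau1 N := by
        rw [hferm]
      rwa [mul_assoc, htau_sq, mul_one] at h1
    rw [this, Matrix.neg_mul]
  have hrank : A.rank = H.rank := by
    apply Matrix.rank_mul_eq_left_of_isUnit_det
    have : IsUnit (tau1 N) := ⟨⟨tau1 N, tau1 N, htau_sq, htau_sq⟩, rfl⟩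
    exact (Matrix.isUnit_iff_isUnit_det _).mp this
  have heven : Even H.rank := hrank ▸ even_rank_of_skew A hskew
  have hrn := LinearMap.finrank_range_add_finrank_ker H.mulVecLin
  have hcard : Module.finrank ℂ ((Fin N ⊕ Fin N) → ℂ) = N + N := by
    simp [Module.finrank_pi]
  obtain ⟨r, hr⟩ := heven
  have hrank_def : H.rank = Module.finrank ℂ (LinearMap.range H.mulVecLin) := rfl
  exact ⟨N - r, by omega⟩
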